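/- There exists a graph G with chromatic number 3 and a minimum-size G-separating system (of size 2) that does not arise from any proper 3-coloring of G; i.e., the separating system assigns identical membership vectors to two vertices that receive different colors in every proper 3-coloring. -/

import Mathlib

/-- A `G`-separating system: every edge is separated by some set. -/
def IsSepSys {V : Type*} (G : SimpleGraph V) {m : ℕ} (I : Fin m → Finset V) : Prop :=
  ∀ u v : V, G.Adj u v → ∃ i, (u ∈ I i ∧ v ∉ I i) ∨ (u ∉ I i ∧ v ∈ I i)

/-- The witness graph on 5 vertices: triangle 0,1,2; vertex 3 adjacent to 1,2;
vertex 4 adjacent to 0,2. -/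
def Gw : SimpleGraph (Fin 5) :=
  SimpleGraph.fromRel (fun x y =>
    (x.val, y.val) ∈ [(0,1),(0,2),(1,2),(1,3),(2,3),(0,4),(2,4)])

instance : DecidableRel Gw.Adj := by
  unfold Gw SimpleGraph.fromRel
  intro a b
  exact instDecidableAnd

lemma Gw_col3 : Gw.Colorable 3 := by
  refine ⟨SimpleGraph.Coloring.mk (fun x => ![0, 1, 2, 0, 1] x) ?_⟩
  decide

lemma Gw_not_col2 : ¬ Gw.Colorable 2 := by
  rintro ⟨C⟩
  have h : ∀ a b, Gw.Adj a b → C a ≠ C b := fun a b hab => C.valid hab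
  revert h
  have : ¬ ∃ f : Fin 5 → Fin 2, ∀ a b, Gw.Adj a b → f a ≠ f b := by decide
  intro h
  exact this ⟨C, h⟩

set_option maxRecDepth 4000 in
theorem stmt_13 :
    ∃ (V : Type) (_ : Fintype V) (G : SimpleGraph V) (I : Fin 2 → Finset V)
      (u v : V),
      G.chromaticNumber = (3 : ℕ∞) ∧ IsSepSys G I ∧ u ≠ v ∧
      (∀ i : Fin 2, u ∈ I i ↔ v ∈ I i) ∧
      (∀ C : V → Fin 3, (∀ a b : V, G.Adj a b → C a ≠ C b) → C u ≠ C v) := by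
  refine ⟨Fin 5, inferInstance, Gw, ![{3, 4, 0}, {3, 4, 1}], 3, 4, ?_, ?_, ?_, ?_, ?_⟩
  · apply le_antisymm
    · exact_mod_cast Gw_col3.chromaticNumber_le
    · have h2 : ¬ (Gw.chromaticNumber ≤ (2 : ℕ)) := by
        rw [SimpleGraph.chromaticNumber_le_iff_colorable]
        exact Gw_not_col2
      have := not_le.mp h2
      have h3 : ((2 : ℕ) : ℕ∞) + 1 ≤ Gw.chromaticNumber :=
        Order.add_one_le_of_lt this
      have h4 : (3 : ℕ∞) = 2 + 1 := by norm_num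
      rw [h4]
      exact h3
  · intro u v h
    revert h
    revert u v
    decide
  · decide
  · decide
  · decide
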